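/- The closed-form one-loop coefficient f⁽¹⁾ defined by f⁽¹⁾(r,t;k,l) = Σ_{j=1}^{t¹}[m(r¹+t¹-j, r²+t²; k¹,k², l¹+1-j, l²) - m(t¹-j, t²; k¹-r¹, k²-r², l¹+1-j, l²)] - Σ_{j=1}^{t²} m(r¹, r²+t²-j; k¹, k², l¹-t¹, l²+1-j), where m(r;k,l) = θ(components ≥ 0)·r¹!r²!(1+k¹+k²)!(l¹+l²)!/(k¹!k²!l¹!l²!(1+r¹+r²)!), satisfies the antisymmetry f⁽¹⁾(r,t;k,l) = -f⁽¹⁾(t,r;l,k), for all integer tuples with k+l = r+t-(1,1). -/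

import Mathlib

noncomputable section


def bet (p q : ℕ) : ℚ := (p.factorial * q.factorial : ℚ) / ((p + q + 1).factorial)
def Af (p q : ℕ) : ℚ := ((1 + p + q).factorial : ℚ) / (p.factorial * q.factorial)
def ch (m s : ℕ) : ℚ := ((m + s).choose s : ℚ)

lemma fact_ne (n : ℕ) : ((n.factorial : ℚ)) ≠ 0 := by
  exact_mod_cast n.factorial_ne_zero

lemma fact_cast_succ (n : ℕ) : (((n+1).factorial : ℚ)) = ((n:ℚ)+1) * (n.factorial : ℚ) := by
  rw [Nat.factorial_succ]; push_cast; ring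

lemma ch_eq (m s : ℕ) : ch m s = ((m+s).factorial : ℚ) / (m.factorial * s.factorial) := by
  rw [ch, Nat.cast_choose ℚ (by omega : s ≤ m + s), show m+s-s = m from by omega, mul_comm]

lemma bet_symm (p q : ℕ) : bet p q = bet q p := by
  rw [bet, bet, mul_comm ((p.factorial : ℚ)), Nat.add_comm p q]

lemma bet_pascal (p q : ℕ) : bet p q = bet (p+1) q + bet p (q+1) := by
  rw [bet, bet, bet,
    show (p+1)+q+1 = (p+q+1)+1 by omega, show p+(q+1)+1 = (p+q+1)+1 by omega,
    fact_cast_succ (p+q+1), fact_cast_succ p, fact_cast_succ q]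
  have h1 := fact_ne p; have h2 := fact_ne q; have h3 := fact_ne (p+q+1)
  field_simp
  push_cast; ring

lemma Af_bet (p q : ℕ) : Af p q * bet p q = 1 := by
  rw [Af, bet, show 1+p+q = p+q+1 by omega]
  have h1 := fact_ne p; have h2 := fact_ne q; have h3 := fact_ne (p+q+1)
  field_simp

lemma ch_zero (m : ℕ) : ch m 0 = 1 := by simp [ch]

lemma Af_zero (q : ℕ) : Af 0 q = (q:ℚ)+1 := by
  rw [Af, show 1+0+q = q+1 from by omega, fact_cast_succ]
  rw [Nat.factorial_zero]
  have := fact_ne q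
  field_simp
  norm_num

lemma bet_zero (n : ℕ) : bet 0 n = 1/((n:ℚ)+1) := by
  rw [bet, show 0+n+1 = n+1 from by omega, fact_cast_succ, Nat.factorial_zero]
  have := fact_ne n
  have h2 : (n:ℚ)+1 ≠ 0 := by positivity
  field_simp
  ring

-- identity 4 : step for (II) base
lemma id4 (p q m : ℕ) :
    Af (p+1) q * bet (p+1) (q+m+1) + Af 0 m * (ch q (p+1) * bet (p+1) (m+q+1))
      = Af p q * bet p (q+m+1) := by
  rw [Af_zero, Af, Af, bet, bet, bet, ch_eq]
  rw [show 1+(p+1)+q = (1+p+q)+1 from by omega]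
  rw [show (p+1)+(q+m+1)+1 = (p+(q+m+1)+1)+1 from by omega]
  rw [show (p+1)+(m+q+1)+1 = (p+(q+m+1)+1)+1 from by omega]
  rw [show (m+q+1) = (q+m+1) from by omega]
  rw [show q+(p+1) = (1+p+q) from by omega]
  rw [fact_cast_succ (1+p+q), fact_cast_succ (p+(q+m+1)+1), fact_cast_succ p]
  have h1 := fact_ne p; have h2 := fact_ne q; have h3 := fact_ne (q+m+1)
  have h4 := fact_ne (1+p+q); have h5 := fact_ne (p+(q+m+1)+1)
  have h6 : ((p:ℚ)+1) ≠ 0 := by positivity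
  have h7 : ((p:ℚ)+(q+m+1)+1+1) ≠ 0 := by positivity
  have h8 : ((1:ℚ)+p+q+1) ≠ 0 := by positivity
  field_simp
  push_cast
  ring

lemma choose_cast_eq (m n : ℕ) :
    (((m+n+1).choose (n+1) : ℕ) : ℚ) = ((m+n+1).factorial : ℚ) / ((n+1).factorial * m.factorial) := by
  rw [Nat.cast_choose ℚ (by omega : n+1 ≤ m+n+1), show m+n+1-(n+1) = m from by omega]

-- identity 5 : base for (T)
lemma id5 (n m q : ℕ) :
    Af (n+1) m * bet (n+1) (m+q+1) - Af n m * bet n (m+q+1)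
      = -(((m+n+1).choose (n+1) : ℕ) : ℚ) * Af 0 q * bet (n+1) (m+q+1) := by
  rw [choose_cast_eq, Af_zero, Af, Af, bet, bet]
  rw [show 1+(n+1)+m = (1+n+m)+1 from by omega]
  rw [show (n+1)+(m+q+1)+1 = (n+(m+q+1)+1)+1 from by omega]
  rw [show m+n+1 = (1+n+m) from by omega]
  rw [fact_cast_succ (1+n+m), fact_cast_succ (n+(m+q+1)+1), fact_cast_succ n]
  have h1 := fact_ne n; have h2 := fact_ne m; have h3 := fact_ne (m+q+1)
  have h4 := fact_ne (1+n+m); have h5 := fact_ne (n+(m+q+1)+1); have h6 := fact_ne q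
  have h7 : ((n:ℚ)+1) ≠ 0 := by positivity
  have h8 : ((n:ℚ)+(m+q+1)+1+1) ≠ 0 := by positivity
  have h9 : ((q:ℚ)+1) ≠ 0 := by positivity
  field_simp
  push_cast
  ring

-- identity 6 : step for (T)
set_option maxHeartbeats 2000000 in
lemma id6 (n m p q : ℕ) :
    ch q (p+1) * (Af (n+1) m * bet (n+1+(p+1)) (m+q+1) - Af n m * bet (n+(p+1)) (m+q+1))
      = (((m+n+1).choose (n+1) : ℕ) : ℚ) * Af p q * bet (n+1+p) (m+q+1)
        - (((m+n+1).choose (n+1) : ℕ) : ℚ) * Af (p+1) q * bet (n+1+(p+1)) (m+q+1) := by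
  rw [choose_cast_eq, ch_eq, Af, Af, Af, Af, bet, bet, bet]
  rw [show m+n+1 = 1+n+m from by omega]
  rw [show 1+(n+1)+m = (1+n+m)+1 from by omega]
  rw [show 1+(p+1)+q = (1+p+q)+1 from by omega]
  rw [show q+(p+1) = (1+p+q) from by omega]
  rw [show (n+1+(p+1))+(m+q+1)+1 = ((n+1+p+(m+q+1)+1)+1) from by omega]
  rw [show (n+(p+1))+(m+q+1)+1 = (n+1+p+(m+q+1)+1) from by omega]
  rw [show n+(p+1) = (n+1+p) from by omega]
  rw [show n+1+(p+1) = (n+1+p)+1 from by omega]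
  rw [fact_cast_succ (1+n+m), fact_cast_succ (1+p+q), fact_cast_succ (n+1+p+(m+q+1)+1),
    fact_cast_succ (n+1+p), fact_cast_succ p, fact_cast_succ n]
  have h1 := fact_ne n; have h2 := fact_ne m; have h3 := fact_ne (m+q+1)
  have h4 := fact_ne (1+n+m); have h5 := fact_ne (n+1+p+(m+q+1)+1); have h6 := fact_ne q
  have h7 := fact_ne p; have h8 := fact_ne (1+p+q); have h9 := fact_ne (n+1+p)
  have g1 : ((n:ℚ)+1+p+(m+q+1)+1+1) ≠ 0 := by positivity
  have g2 : ((1:ℚ)+n+m+1) ≠ 0 := by positivity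
  have g3 : ((1:ℚ)+p+q+1) ≠ 0 := by positivity
  have g4 : ((p:ℚ)+1) ≠ 0 := by positivity
  have g5 : ((n:ℚ)+1+p+1) ≠ 0 := by positivity
  field_simp
  push_cast
  ring

def PSq (m p q N : ℕ) : ℚ := ∑ s ∈ Finset.range N, ch m s * bet (p+s) (q+m+1)

lemma PSum_zero (m p q : ℕ) : PSq m p q 0 = 0 := by simp [PSq]

lemma PSum_succ (m p q N : ℕ) :
    PSq m p q (N+1) = PSq m p q N + ch m N * bet (p+N) (q+m+1) := by
  simp [PSq, Finset.sum_range_succ]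

lemma PSum_one (m p q : ℕ) : PSq m p q 1 = bet p (q+m+1) := by
  simp [PSq, ch_zero]

lemma ch_zero_left (s : ℕ) : ch 0 s = 1 := by simp [ch]

lemma choose_pascal_cast (N k : ℕ) :
    (((N+1).choose (k+1) : ℕ) : ℚ) = ((N.choose k : ℕ) : ℚ) + ((N.choose (k+1) : ℕ) : ℚ) := by
  rw [Nat.choose_succ_succ]; push_cast; ring

-- (T2)
lemma lemT2 (n q p : ℕ) : ∀ m : ℕ,
    PSq (n+1) q p (m+1) - PSq n q p (m+1)
      = -(((n+m+1).choose m : ℕ) : ℚ) * bet (q+m+1) (p+n+1) := by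
  intro m
  induction m with
  | zero =>
    rw [PSum_one, PSum_one, show p+(n+1)+1 = (p+n+1)+1 from by omega]
    simp only [Nat.add_zero, Nat.choose_zero_right, Nat.cast_one]
    linear_combination -bet_pascal q (p+n+1)
  | succ m ih =>
    rw [PSum_succ (n+1) q p (m+1), PSum_succ n q p (m+1)]
    have e1 : ch (n+1) (m+1) = (((n+m+2).choose (m+1) : ℕ) : ℚ) := by
      rw [ch]; congr 2; omega
    have e2 : ch n (m+1) = (((n+m+1).choose (m+1) : ℕ) : ℚ) := by
      rw [ch, show n+(m+1) = n+m+1 from by omega]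
    have e3 : q+(m+1)+1 = (q+m+1)+1 := by omega
    have e4 : p+(n+1)+1 = (p+n+1)+1 := by omega
    have e5 : q+(m+1) = q+m+1 := by omega
    have e6 : (q+m+1)+(n+1)+1 = (q+m+1)+n+1+1 := by omega
    rw [e1, e2, e5, e4]
    have hp : bet (q+m+1) (p+n+1) = bet (q+m+2) (p+n+1) + bet (q+m+1) ((p+n+1)+1) :=
      bet_pascal (q+m+1) (p+n+1)
    have hq : (((n+(m+1)+1).choose (m+1) : ℕ) : ℚ)
        = (((n+m+1).choose m : ℕ) : ℚ) + (((n+m+1).choose (m+1) : ℕ) : ℚ) := by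
      rw [show n+(m+1)+1 = (n+m+1)+1 from by omega, choose_pascal_cast]
    rw [show n+m+2 = (n+m+1)+1 from by omega, choose_pascal_cast]
    rw [show q+m+1+1 = q+m+2 from by omega]
    linear_combination ih + (-(((n+m+1).choose m : ℕ) : ℚ) - (((n+m+1).choose (m+1) : ℕ) : ℚ)) * hp + bet (q+m+2) (p+n+1) * hq

-- (T)
lemma lemT (n m q : ℕ) : ∀ p : ℕ,
    Af (n+1) m * PSq q (n+1) m (p+1) - Af n m * PSq q n m (p+1)
      = -(((m+n+1).choose (n+1) : ℕ) : ℚ) * Af p q * bet (n+1+p) (m+q+1) := by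
  intro p
  induction p with
  | zero =>
    rw [PSum_one, PSum_one, show n+1+0 = n+1 from rfl]
    exact id5 n m q
  | succ p ih =>
    rw [PSum_succ q (n+1) m (p+1), PSum_succ q n m (p+1)]
    linear_combination ih + id6 n m p q

-- (I)
lemma bigI_base (p q : ℕ) : ∀ m : ℕ, PSq m p q 1 + PSq 0 q p (m+1) = bet p q := by
  intro m
  induction m with
  | zero =>
    rw [PSum_one, PSum_one, show q+0+1 = q+1 from by omega, show p+0+1 = p+1 from by omega]
    linear_combination -bet_pascal p q + bet_symm q (p+1)
  | succ m ih =>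
    rw [PSum_one, PSum_succ 0 q p (m+1), ch_zero_left,
      show q+(m+1)+1 = q+m+1+1 from by omega, show q+(m+1) = q+m+1 from by omega,
      show p+0+1 = p+1 from by omega]
    rw [PSum_one] at ih
    linear_combination ih - bet_pascal p (q+m+1) + bet_symm (q+m+1) (p+1)

lemma bigI : ∀ n m p q : ℕ, PSq m p q (n+1) + PSq n q p (m+1) = bet p q := by
  intro n
  induction n with
  | zero => exact fun m p q => bigI_base p q m
  | succ n ih =>
    intro m p q
    rw [PSum_succ m p q (n+1)]
    have hcs : (n+m+1).choose (n+1) = (n+m+1).choose m := by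
      rw [← Nat.choose_symm (show n+1 ≤ n+m+1 by omega),
        show n+m+1-(n+1) = m from by omega]
    have e : ch m (n+1) = (((n+m+1).choose m : ℕ) : ℚ) := by
      rw [ch, show m+(n+1) = n+m+1 from by omega, hcs]
    rw [e, show p+(n+1) = p+n+1 from by omega]
    linear_combination ih m p q + lemT2 n q p m
      + (((n+m+1).choose m : ℕ) : ℚ) * bet_symm (p+n+1) (q+m+1)

-- (II)
lemma bigII_base (m q : ℕ) : ∀ p : ℕ,
    Af p q * PSq m p q 1 + Af 0 m * PSq q 0 m (p+1) = 1 := by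
  intro p
  induction p with
  | zero =>
    rw [PSum_one, PSum_one, Af_zero, Af_zero, bet_zero, bet_zero]
    have h1 : ((q:ℚ)+(m:ℚ)+1+1) ≠ 0 := by positivity
    have h2 : ((m:ℚ)+(q:ℚ)+1+1) ≠ 0 := by positivity
    push_cast
    field_simp
    ring
  | succ p ih =>
    rw [PSum_one, PSum_succ q 0 m (p+1), show (0:ℕ)+(p+1) = p+1 from by omega]
    rw [PSum_one] at ih
    linear_combination ih + id4 p q m

lemma bigII : ∀ n m p q : ℕ, Af p q * PSq m p q (n+1) + Af n m * PSq q n m (p+1) = 1 := by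
  intro n
  induction n with
  | zero => exact fun m p q => bigII_base m q p
  | succ n ih =>
    intro m p q
    rw [PSum_succ m p q (n+1)]
    have e : ch m (n+1) = (((m+n+1).choose (n+1) : ℕ) : ℚ) := by
      rw [ch, show m+(n+1) = m+n+1 from by omega]
    rw [e, show p+(n+1) = n+1+p from by omega, show q+m+1 = m+q+1 from by omega]
    linear_combination ih m p q + lemT n m q p


def sideE (a b c d k1 k2 l1 l2 : ℕ) : ℚ :=
  Af k1 k2 * (PSq l2 k1 k2 (l1+1) - PSq l2 k1 k2 (l1+1-c))
  - (if a ≤ k1 ∧ b ≤ k2 then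
      Af (k1-a) (k2-b) * (PSq l2 (k1-a) (k2-b) (l1+1) - PSq l2 (k1-a) (k2-b) (l1+1-c)) else 0)
  - (if c ≤ l1 then
      Af k1 k2 * (PSq (l1-c) k2 k1 (l2+1) - PSq (l1-c) k2 k1 (l2+1-d)) else 0)

lemma caseI (a b c d k1 k2 l1 l2 : ℕ) (hk1 : k1+l1+1 = a+c) (hk2 : k2+l2+1 = b+d)
    (ha : a ≤ k1) (hb : b ≤ k2) :
    sideE a b c d k1 k2 l1 l2 + sideE c d a b l1 l2 k1 k2 = 0 := by
  have hc : ¬ c ≤ l1 := by omega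
  have hd : ¬ d ≤ l2 := by omega
  rw [sideE, sideE, if_pos ⟨ha, hb⟩, if_neg hc, if_pos ha,
    if_neg (show ¬ (c ≤ l1 ∧ d ≤ l2) from fun h => hc h.1),
    show l1+1-c = 0 from by omega, show k1+1-a = (k1-a)+1 from by omega,
    show k2+1-b = (k2-b)+1 from by omega, PSum_zero, PSum_zero]
  linear_combination bigII l1 l2 k1 k2 - Af l1 l2 * bigI (k1-a) k2 l1 l2
    - bigII l1 l2 (k1-a) (k2-b) + Af l1 l2 * bigI (k1-a) (k2-b) l1 l2

lemma caseII (a b c d k1 k2 l1 l2 : ℕ) (hk1 : k1+l1+1 = a+c) (hk2 : k2+l2+1 = b+d)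
    (ha : a ≤ k1) (hd : d ≤ l2) :
    sideE a b c d k1 k2 l1 l2 + sideE c d a b l1 l2 k1 k2 = 0 := by
  have hc : ¬ c ≤ l1 := by omega
  have hb : ¬ b ≤ k2 := by omega
  rw [sideE, sideE, if_neg (show ¬ (a ≤ k1 ∧ b ≤ k2) from fun h => hb h.2), if_neg hc,
    if_pos ha, if_neg (show ¬ (c ≤ l1 ∧ d ≤ l2) from fun h => hc h.1),
    show l1+1-c = 0 from by omega, show k1+1-a = (k1-a)+1 from by omega,
    show k2+1-b = 0 from by omega, PSum_zero, PSum_zero]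
  linear_combination bigII l1 l2 k1 k2 - Af l1 l2 * bigI (k1-a) k2 l1 l2 - Af_bet l1 l2

lemma core (a b c d k1 k2 l1 l2 : ℕ) (hk1 : k1+l1+1 = a+c) (hk2 : k2+l2+1 = b+d) :
    sideE a b c d k1 k2 l1 l2 + sideE c d a b l1 l2 k1 k2 = 0 := by
  rcases le_or_gt a k1 with ha | ha <;> rcases le_or_gt b k2 with hb | hb
  · exact caseI a b c d k1 k2 l1 l2 hk1 hk2 ha hb
  · exact caseII a b c d k1 k2 l1 l2 hk1 hk2 ha (by omega)
  · have := caseII c d a b l1 l2 k1 k2 (by omega) (by omega) (by omega) (by omega)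
    linarith
  · have := caseI c d a b l1 l2 k1 k2 (by omega) (by omega) (by omega) (by omega)
    linarith

lemma sum_trunc (f : ℕ → ℚ) (L : ℕ) : ∀ c : ℕ,
    (∑ j ∈ Finset.range c, (if j ≤ L then f (L-j) else 0))
      = (∑ s ∈ Finset.range (L+1), f s) - ∑ s ∈ Finset.range (L+1-c), f s := by
  intro c
  induction c with
  | zero => simp
  | succ c ih =>
    rw [Finset.sum_range_succ, ih]
    by_cases h : c ≤ L
    · rw [if_pos h, show L+1-c = (L-c)+1 from by omega, Finset.sum_range_succ f (L-c),
        show L+1-(c+1) = L-c from by omega]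
      ring
    · rw [if_neg h, show L+1-c = 0 from by omega, show L+1-(c+1) = 0 from by omega]
      ring

lemma ch_symm (m s : ℕ) : ch m s = ch s m := by
  have h := Nat.choose_symm (show s ≤ m+s by omega)
  rw [show m+s-s = m from by omega] at h
  rw [ch, ch, Nat.add_comm s m, ← h]

/-- The closed-form building block `m(r; k, l)` (with the overall factor `1/(16π²)` dropped,
working over `ℚ`), extended by zero whenever any component of `r`, `k`, `l` is negative:
`m(r;k,l) = r¹! r²! (1+k¹+k²)! (l¹+l²)! / (k¹! k²! l¹! l²! (1+r¹+r²)!)`. -/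
def mFun (r k l : ℤ × ℤ) : ℚ :=
  if 0 ≤ r.1 ∧ 0 ≤ r.2 ∧ 0 ≤ k.1 ∧ 0 ≤ k.2 ∧ 0 ≤ l.1 ∧ 0 ≤ l.2 then
    ((Nat.factorial r.1.toNat : ℚ) * (Nat.factorial r.2.toNat : ℚ) *
        (Nat.factorial (1 + k.1 + k.2).toNat : ℚ) * (Nat.factorial (l.1 + l.2).toNat : ℚ)) /
      ((Nat.factorial k.1.toNat : ℚ) * (Nat.factorial k.2.toNat : ℚ) *
        (Nat.factorial l.1.toNat : ℚ) * (Nat.factorial l.2.toNat : ℚ) *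
        (Nat.factorial (1 + r.1 + r.2).toNat : ℚ))
  else 0

/-- The one-loop chiral algebra OPE coefficient `f⁽¹⁾(r,t;k,l)` (eq. (main_m1) of the paper,
with `1/(16π²)` dropped), extended by zero unless all components are nonnegative and
`k + l = r + t - (1,1)`.  Its specialization to `t = (1,0)` is exactly `m(r;k,l)`. -/
def fOne (r t k l : ℤ × ℤ) : ℚ :=
  if 0 ≤ r.1 ∧ 0 ≤ r.2 ∧ 0 ≤ t.1 ∧ 0 ≤ t.2 ∧ 0 ≤ k.1 ∧ 0 ≤ k.2 ∧ 0 ≤ l.1 ∧ 0 ≤ l.2 ∧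
      k.1 + l.1 = r.1 + t.1 - 1 ∧ k.2 + l.2 = r.2 + t.2 - 1 then
    (∑ j ∈ Finset.range t.1.toNat,
        (mFun (r.1 + t.1 - ((j : ℤ) + 1), r.2 + t.2) k (l.1 + 1 - ((j : ℤ) + 1), l.2)
          - mFun (t.1 - ((j : ℤ) + 1), t.2) (k.1 - r.1, k.2 - r.2) (l.1 + 1 - ((j : ℤ) + 1), l.2)))
    - ∑ j ∈ Finset.range t.2.toNat,
        mFun (r.1, r.2 + t.2 - ((j : ℤ) + 1)) k (l.1 - t.1, l.2 + 1 - ((j : ℤ) + 1))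
  else 0

lemma mFun_cast (x1 x2 y1 y2 z1 z2 : ℕ) :
    mFun ((x1:ℤ), (x2:ℤ)) ((y1:ℤ), (y2:ℤ)) ((z1:ℤ), (z2:ℤ))
      = bet x1 x2 * Af y1 y2 * ch z2 z1 := by
  rw [mFun, if_pos]
  · rw [show (1 + (y1:ℤ) + y2) = ((1+y1+y2 : ℕ) : ℤ) from by push_cast; ring,
      show ((z1:ℤ) + z2) = ((z1+z2 : ℕ) : ℤ) from by push_cast; ring,
      show (1 + (x1:ℤ) + x2) = ((1+x1+x2 : ℕ) : ℤ) from by push_cast; ring]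
    simp only [Int.toNat_natCast]
    rw [bet, Af, ch_eq, show x1+x2+1 = 1+x1+x2 from by omega,
      show z2+z1 = z1+z2 from by omega]
    have h1 := fact_ne x1; have h2 := fact_ne x2; have h3 := fact_ne y1
    have h4 := fact_ne y2; have h5 := fact_ne z1; have h6 := fact_ne z2
    have h7 := fact_ne (1+x1+x2)
    field_simp
  · refine ⟨?_, ?_, ?_, ?_, ?_, ?_⟩ <;> exact Int.natCast_nonneg _

lemma mFun_zero {r k l : ℤ × ℤ}
    (h : r.1 < 0 ∨ r.2 < 0 ∨ k.1 < 0 ∨ k.2 < 0 ∨ l.1 < 0 ∨ l.2 < 0) : mFun r k l = 0 := by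
  rw [mFun, if_neg]
  rintro ⟨h1, h2, h3, h4, h5, h6⟩
  rcases h with h|h|h|h|h|h <;> omega

lemma fOne_eq (a b c d k1 k2 l1 l2 : ℕ) (hk1 : k1+l1+1 = a+c) (hk2 : k2+l2+1 = b+d) :
    fOne ((a:ℤ), (b:ℤ)) ((c:ℤ), (d:ℤ)) ((k1:ℤ), (k2:ℤ)) ((l1:ℤ), (l2:ℤ))
      = sideE a b c d k1 k2 l1 l2 := by
  rw [fOne, if_pos]
  · simp only [Int.toNat_natCast]
    have S1 : (∑ j ∈ Finset.range c,
        (mFun ((a:ℤ) + c - ((j:ℤ)+1), (b:ℤ) + d) ((k1:ℤ), (k2:ℤ)) ((l1:ℤ) + 1 - ((j:ℤ)+1), (l2:ℤ))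
          - mFun ((c:ℤ) - ((j:ℤ)+1), (d:ℤ)) ((k1:ℤ) - a, (k2:ℤ) - b) ((l1:ℤ) + 1 - ((j:ℤ)+1), (l2:ℤ))))
        = Af k1 k2 * (PSq l2 k1 k2 (l1+1) - PSq l2 k1 k2 (l1+1-c))
          - (if a ≤ k1 ∧ b ≤ k2 then
              Af (k1-a) (k2-b) * (PSq l2 (k1-a) (k2-b) (l1+1) - PSq l2 (k1-a) (k2-b) (l1+1-c)) else 0) := by
      rw [Finset.sum_sub_distrib]
      congr 1
      · -- first sum
        rw [show (∑ j ∈ Finset.range c,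
            mFun ((a:ℤ) + c - ((j:ℤ)+1), (b:ℤ) + d) ((k1:ℤ), (k2:ℤ)) ((l1:ℤ) + 1 - ((j:ℤ)+1), (l2:ℤ)))
            = ∑ j ∈ Finset.range c, (if j ≤ l1 then
                Af k1 k2 * (ch l2 (l1-j) * bet (k1+(l1-j)) (k2+l2+1)) else 0) from
          Finset.sum_congr rfl fun j hj => ?_]
        · rw [show (∑ j ∈ Finset.range c, (if j ≤ l1 then
                Af k1 k2 * (ch l2 (l1-j) * bet (k1+(l1-j)) (k2+l2+1)) else 0))
              = ∑ j ∈ Finset.range c, Af k1 k2 * (if j ≤ l1 then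
                  (fun s => ch l2 s * bet (k1+s) (k2+l2+1)) (l1-j) else 0) from
            Finset.sum_congr rfl fun j _ => by by_cases h : j ≤ l1 <;> simp [h]]
          rw [← Finset.mul_sum, sum_trunc (fun s => ch l2 s * bet (k1+s) (k2+l2+1)) l1 c]
          rfl
        · by_cases hjl : j ≤ l1
          · rw [show (a:ℤ) + c - ((j:ℤ)+1) = ((k1 + (l1-j) : ℕ) : ℤ) from by omega,
              show (b:ℤ) + d = ((k2+l2+1 : ℕ) : ℤ) from by omega,
              show (l1:ℤ) + 1 - ((j:ℤ)+1) = ((l1-j : ℕ) : ℤ) from by omega,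
              mFun_cast, if_pos hjl]
            ring
          · rw [mFun_zero (Or.inr (Or.inr (Or.inr (Or.inr (Or.inl (by simp; omega)))))),
              if_neg hjl]
      · -- second sum
        by_cases hab : a ≤ k1 ∧ b ≤ k2
        · obtain ⟨ha, hb⟩ := hab
          rw [if_pos ⟨ha, hb⟩]
          rw [show (∑ j ∈ Finset.range c,
              mFun ((c:ℤ) - ((j:ℤ)+1), (d:ℤ)) ((k1:ℤ) - a, (k2:ℤ) - b) ((l1:ℤ) + 1 - ((j:ℤ)+1), (l2:ℤ)))
              = ∑ j ∈ Finset.range c, (if j ≤ l1 then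
                  Af (k1-a) (k2-b) * (ch l2 (l1-j) * bet ((k1-a)+(l1-j)) ((k2-b)+l2+1)) else 0) from
            Finset.sum_congr rfl fun j hj => ?_]
          · rw [show (∑ j ∈ Finset.range c, (if j ≤ l1 then
                  Af (k1-a) (k2-b) * (ch l2 (l1-j) * bet ((k1-a)+(l1-j)) ((k2-b)+l2+1)) else 0))
                = ∑ j ∈ Finset.range c, Af (k1-a) (k2-b) * (if j ≤ l1 then
                    (fun s => ch l2 s * bet ((k1-a)+s) ((k2-b)+l2+1)) (l1-j) else 0) from
              Finset.sum_congr rfl fun j _ => by by_cases h : j ≤ l1 <;> simp [h]]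
            rw [← Finset.mul_sum, sum_trunc (fun s => ch l2 s * bet ((k1-a)+s) ((k2-b)+l2+1)) l1 c]
            rfl
          · have hjc : j < c := Finset.mem_range.mp hj
            by_cases hjl : j ≤ l1
            · rw [show (c:ℤ) - ((j:ℤ)+1) = (((k1-a) + (l1-j) : ℕ) : ℤ) from by omega,
                show (d:ℤ) = (((k2-b)+l2+1 : ℕ) : ℤ) from by omega,
                show (k1:ℤ) - a = ((k1-a : ℕ) : ℤ) from by omega,
                show (k2:ℤ) - b = ((k2-b : ℕ) : ℤ) from by omega,
                show (l1:ℤ) + 1 - ((j:ℤ)+1) = ((l1-j : ℕ) : ℤ) from by omega,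
                mFun_cast, if_pos hjl]
              ring
            · rw [mFun_zero (Or.inr (Or.inr (Or.inr (Or.inr (Or.inl (by simp; omega)))))),
                if_neg hjl]
        · rw [if_neg hab]
          refine Finset.sum_eq_zero fun j hj => mFun_zero ?_
          rcases not_and_or.mp hab with h | h
          · exact Or.inr (Or.inr (Or.inl (by simp; omega)))
          · exact Or.inr (Or.inr (Or.inr (Or.inl (by simp; omega))))
    have S3 : (∑ j ∈ Finset.range d,
        mFun ((a:ℤ), (b:ℤ) + d - ((j:ℤ)+1)) ((k1:ℤ), (k2:ℤ)) ((l1:ℤ) - c, (l2:ℤ) + 1 - ((j:ℤ)+1)))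
        = (if c ≤ l1 then
            Af k1 k2 * (PSq (l1-c) k2 k1 (l2+1) - PSq (l1-c) k2 k1 (l2+1-d)) else 0) := by
      by_cases hcl : c ≤ l1
      · rw [if_pos hcl]
        rw [show (∑ j ∈ Finset.range d,
            mFun ((a:ℤ), (b:ℤ) + d - ((j:ℤ)+1)) ((k1:ℤ), (k2:ℤ)) ((l1:ℤ) - c, (l2:ℤ) + 1 - ((j:ℤ)+1)))
            = ∑ j ∈ Finset.range d, (if j ≤ l2 then
                Af k1 k2 * (ch (l1-c) (l2-j) * bet (k2+(l2-j)) (k1+(l1-c)+1)) else 0) from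
          Finset.sum_congr rfl fun j hj => ?_]
        · rw [show (∑ j ∈ Finset.range d, (if j ≤ l2 then
                Af k1 k2 * (ch (l1-c) (l2-j) * bet (k2+(l2-j)) (k1+(l1-c)+1)) else 0))
              = ∑ j ∈ Finset.range d, Af k1 k2 * (if j ≤ l2 then
                  (fun s => ch (l1-c) s * bet (k2+s) (k1+(l1-c)+1)) (l2-j) else 0) from
            Finset.sum_congr rfl fun j _ => by by_cases h : j ≤ l2 <;> simp [h]]
          rw [← Finset.mul_sum, sum_trunc (fun s => ch (l1-c) s * bet (k2+s) (k1+(l1-c)+1)) l2 d]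
          rfl
        · by_cases hjl : j ≤ l2
          · rw [show (a:ℤ) = ((a : ℕ) : ℤ) from rfl,
              show (b:ℤ) + d - ((j:ℤ)+1) = ((k2 + (l2-j) : ℕ) : ℤ) from by omega,
              show (l1:ℤ) - c = ((l1-c : ℕ) : ℤ) from by omega,
              show (l2:ℤ) + 1 - ((j:ℤ)+1) = ((l2-j : ℕ) : ℤ) from by omega,
              mFun_cast, if_pos hjl, show a = k1+(l1-c)+1 from by omega,
              bet_symm (k1+(l1-c)+1), ch_symm]
            ring
          · rw [mFun_zero (Or.inr (Or.inr (Or.inr (Or.inr (Or.inr (by simp; omega)))))),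
              if_neg hjl]
      · rw [if_neg hcl]
        refine Finset.sum_eq_zero fun j hj => mFun_zero ?_
        exact Or.inr (Or.inr (Or.inr (Or.inr (Or.inl (by simp; omega)))))
    rw [S1, S3, sideE]
  · refine ⟨Int.natCast_nonneg _, Int.natCast_nonneg _, Int.natCast_nonneg _,
      Int.natCast_nonneg _, Int.natCast_nonneg _, Int.natCast_nonneg _,
      Int.natCast_nonneg _, Int.natCast_nonneg _, by omega, by omega⟩

/-- Antisymmetry of the closed-form one-loop coefficient:
`f⁽¹⁾(r,t;k,l) = -f⁽¹⁾(t,r;l,k)` for all integer tuples with `k + l = r + t - (1,1)`. -/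
theorem fOne_antisymm (r t k l : ℤ × ℤ)
    (h1 : k.1 + l.1 = r.1 + t.1 - 1) (h2 : k.2 + l.2 = r.2 + t.2 - 1) :
    fOne r t k l = - fOne t r l k := by
  obtain ⟨r1, r2⟩ := r
  obtain ⟨t1, t2⟩ := t
  obtain ⟨k1, k2⟩ := k
  obtain ⟨l1, l2⟩ := l
  simp only at h1 h2 ⊢
  by_cases h : 0 ≤ r1 ∧ 0 ≤ r2 ∧ 0 ≤ t1 ∧ 0 ≤ t2 ∧ 0 ≤ k1 ∧ 0 ≤ k2 ∧ 0 ≤ l1 ∧ 0 ≤ l2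
  · obtain ⟨hr1, hr2, ht1, ht2, hk1, hk2, hl1, hl2⟩ := h
    lift r1 to ℕ using hr1 with a
    lift r2 to ℕ using hr2 with b
    lift t1 to ℕ using ht1 with c
    lift t2 to ℕ using ht2 with d
    lift k1 to ℕ using hk1 with k1'
    lift k2 to ℕ using hk2 with k2'
    lift l1 to ℕ using hl1 with l1'
    lift l2 to ℕ using hl2 with l2'
    rw [fOne_eq _ _ _ _ _ _ _ _ (by omega) (by omega),
      fOne_eq _ _ _ _ _ _ _ _ (by omega) (by omega)]
    have := core a b c d k1' k2' l1' l2' (by omega) (by omega)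
    linarith
  · rw [fOne, fOne, if_neg (by omega), if_neg (by omega)]
    norm_num

end
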